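/- Let M be the Coxeter matrix on the index set {1,...,4} ⊔ {1,...,4} (eight generators, the first four corresponding to S_1,...,S_4 and the last four to S_1ᵀ,...,S_4ᵀ) defined by: M(x,x) = 1 for every generator x; M(S_i, S_jᵀ) = M(S_jᵀ, S_i) = 2 whenever i ≠ j; and all other off-diagonal entries equal to ∞ (no relation). Then the group homomorphism from the Coxeter group of M to GL(4,ℝ) sending the i-th generator of the first block to S_i and the i-th generator of the second block to S_iᵀ (which exists because these matrices satisfy the Coxeter relations of M) is injective. Hence the super-Apollonian group ⟨S_1,...,S_4,S_1ᵀ,...,S_4ᵀ⟩ is a Coxeter group with presentation given by the relations S_i² = (S_iᵀ)² = I and (S_i·S_jᵀ)² = I for i ≠ j. -/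

import Mathlib

open Matrix

/-- The Apollonian generators `S₁, S₂, S₃, S₄`. -/
noncomputable def S : Fin 4 → Matrix (Fin 4) (Fin 4) ℝ := fun i =>
  Matrix.of fun j k =>
    if j = i then (if k = i then -1 else 2) else (if j = k then 1 else 0)

/-- The Coxeter matrix of the super-Apollonian group, on eight generators
indexed by `Fin 4 ⊕ Fin 4` (the first block corresponding to `S₁,...,S₄` and
the second to `S₁ᵀ,...,S₄ᵀ`): each generator is an involution, `S i` and `S jᵀ`
commute for `i ≠ j` (order `2`), and all other products have infinite order
(recorded as `0`). -/
def superApollonianCoxeterMatrix : CoxeterMatrix (Fin 4 ⊕ Fin 4) where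
  M := Matrix.of fun x y =>
    if x = y then 1
    else
      match x, y with
      | Sum.inl i, Sum.inr j => if i = j then 0 else 2
      | Sum.inr i, Sum.inl j => if i = j then 0 else 2
      | _, _ => 0
  isSymm := by decide
  diagonal := by decide
  off_diagonal := by
    intro i i' h
    rcases i with i | i <;> rcases i' with i' | i' <;> simp only [of_apply, if_neg h] <;>
      (try split_ifs) <;> decide


namespace SuperApollonian


def sg (x : Fin 4 → ℝ) : ℝ := x 0 + x 1 + x 2 + x 3
def updL (i : Fin 4) (x : Fin 4 → ℝ) : Fin 4 → ℝ :=
  fun j => if j = i then 2 * sg x - 3 * x i else x j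
def updR (i : Fin 4) (x : Fin 4 → ℝ) : Fin 4 → ℝ :=
  fun j => if j = i then -x i else x j + 2 * x i
def oerase (o : Option (Fin 4)) (i : Fin 4) : Option (Fin 4) :=
  if o = some i then none else o
def Phi (x : Fin 4 → ℝ) (a b : Option (Fin 4)) : Prop :=
  8 ≤ sg x ∧
  (∀ j, a ≠ some j → b ≠ some j → 1 ≤ x j ∧ 2 * x j + 2 ≤ sg x) ∧
  (∀ p, a = some p → sg x + 2 ≤ 2 * x p) ∧
  (∀ q, b = some q → x q ≤ -1 ∧
    (∀ j, a ≠ some j → b ≠ some j → 2 ≤ x q + x j) ∧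
    4 ≤ sg x + 4 * x q ∧
    (∀ p, a = some p → 5 ≤ x p + 2 * x q))
lemma sg_updL (i : Fin 4) (x : Fin 4 → ℝ) : sg (updL i x) = 3 * sg x - 4 * x i := by
  fin_cases i <;> simp [sg, updL] <;> ring
lemma sg_updR (i : Fin 4) (x : Fin 4 → ℝ) : sg (updR i x) = sg x + 4 * x i := by
  fin_cases i <;> simp [sg, updR] <;> ring

lemma oerase_eq_some {o : Option (Fin 4)} {i q : Fin 4} :
    oerase o i = some q ↔ o = some q ∧ q ≠ i := by
  unfold oerase
  by_cases h : o = some i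
  · rw [if_pos h]
    constructor
    · intro h2; cases h2
    · rintro ⟨he, hn⟩
      rw [h] at he
      exact absurd (Option.some_injective _ he).symm hn
  · rw [if_neg h]
    constructor
    · intro e; exact ⟨e, fun hqi => h (hqi ▸ e)⟩
    · exact And.left

lemma keyK {x : Fin 4 → ℝ} {a b : Option (Fin 4)} {i : Fin 4} (h : Phi x a b)
    (hai : a ≠ some i) : 2 * x i + 2 ≤ sg x := by
  by_cases hb : b = some i
  · have h5 := (h.2.2.2 i hb).1
    linarith [h.1]
  · exact (h.2.1 i hai hb).2

lemma pair {x : Fin 4 → ℝ} {a b : Option (Fin 4)} {p : Fin 4} (h : Phi x a b)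
    (hp : a = some p)
    (u w : Fin 4) (hu : u ≠ p) (hw : w ≠ p) (huw : u ≠ w) : 2 ≤ x u + x w := by
  have hau : a ≠ some u := by
    rw [hp]; simp only [ne_eq, Option.some.injEq]; exact fun e => hu e.symm
  have haw : a ≠ some w := by
    rw [hp]; simp only [ne_eq, Option.some.injEq]; exact fun e => hw e.symm
  by_cases hbu : b = some u
  · have := (h.2.2.2 u hbu).2.1 w haw
      (by rw [hbu]; simp only [ne_eq, Option.some.injEq]; exact huw)
    linarith
  · by_cases hbw : b = some w
    · have := (h.2.2.2 w hbw).2.1 u hau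
        (by rw [hbw]; simp only [ne_eq, Option.some.injEq]; exact fun e => huw e.symm)
      linarith
    · have h1 := (h.2.1 u hau hbu).1
      have h2 := (h.2.1 w haw hbw).1
      linarith

lemma Cp {x : Fin 4 → ℝ} {a b : Option (Fin 4)} {p i : Fin 4} (h : Phi x a b)
    (hp : a = some p) (hip : i ≠ p) :
    x p + x i + 2 ≤ sg x := by
  fin_cases p <;> fin_cases i <;> (try exact absurd rfl hip)
  · have := pair h hp 2 3 (by decide) (by decide) (by decide)
    show x 0 + x 1 + 2 ≤ sg x
    simp only [sg]; linarith
  · have := pair h hp 1 3 (by decide) (by decide) (by decide)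
    show x 0 + x 2 + 2 ≤ sg x
    simp only [sg]; linarith
  · have := pair h hp 1 2 (by decide) (by decide) (by decide)
    show x 0 + x 3 + 2 ≤ sg x
    simp only [sg]; linarith
  · have := pair h hp 2 3 (by decide) (by decide) (by decide)
    show x 1 + x 0 + 2 ≤ sg x
    simp only [sg]; linarith
  · have := pair h hp 0 3 (by decide) (by decide) (by decide)
    show x 1 + x 2 + 2 ≤ sg x
    simp only [sg]; linarith
  · have := pair h hp 0 2 (by decide) (by decide) (by decide)
    show x 1 + x 3 + 2 ≤ sg x
    simp only [sg]; linarith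
  · have := pair h hp 1 3 (by decide) (by decide) (by decide)
    show x 2 + x 0 + 2 ≤ sg x
    simp only [sg]; linarith
  · have := pair h hp 0 3 (by decide) (by decide) (by decide)
    show x 2 + x 1 + 2 ≤ sg x
    simp only [sg]; linarith
  · have := pair h hp 0 1 (by decide) (by decide) (by decide)
    show x 2 + x 3 + 2 ≤ sg x
    simp only [sg]; linarith
  · have := pair h hp 1 2 (by decide) (by decide) (by decide)
    show x 3 + x 0 + 2 ≤ sg x
    simp only [sg]; linarith
  · have := pair h hp 0 2 (by decide) (by decide) (by decide)
    show x 3 + x 1 + 2 ≤ sg x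
    simp only [sg]; linarith
  · have := pair h hp 0 1 (by decide) (by decide) (by decide)
    show x 3 + x 2 + 2 ≤ sg x
    simp only [sg]; linarith

lemma stepL {x : Fin 4 → ℝ} {a b : Option (Fin 4)} {i : Fin 4}
    (hai : a ≠ some i) (h : Phi x a b) :
    Phi (updL i x) (some i) (oerase b i) := by
  have hK := keyK h hai
  have hs : sg (updL i x) = 3 * sg x - 4 * x i := sg_updL i x
  have h1 := h.1
  have hyi : updL i x i = 2 * sg x - 3 * x i := by simp [updL]
  refine ⟨by linarith, ?_, ?_, ?_⟩
  · intro j hij hbj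
    have hji : j ≠ i := fun e => hij (by rw [e])
    have hyj : updL i x j = x j := by simp [updL, hji]
    have hbj' : b ≠ some j := fun e => hbj (oerase_eq_some.mpr ⟨e, hji⟩)
    rw [hyj, hs]
    by_cases haj : a = some j
    · have h4 := h.2.2.1 j haj
      have hC := Cp h haj (Ne.symm hji)
      exact ⟨by linarith, by linarith⟩
    · have h2 := h.2.1 j haj hbj'
      exact ⟨h2.1, by linarith [h2.2]⟩
  · intro p hp
    have hpi : p = i := by injection hp.symm
    rw [hpi, hyi, hs]
    linarith
  · intro q hq
    obtain ⟨hbq, hqi⟩ := oerase_eq_some.mp hq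
    have H := h.2.2.2 q hbq
    have hyq : updL i x q = x q := by simp [updL, hqi]
    refine ⟨by rw [hyq]; exact H.1, ?_, by rw [hs, hyq]; linarith [H.2.2.1], ?_⟩
    · intro j hij hbj
      have hji : j ≠ i := fun e => hij (by rw [e])
      have hyj : updL i x j = x j := by simp [updL, hji]
      have hbj' : b ≠ some j := fun e => hbj (oerase_eq_some.mpr ⟨e, hji⟩)
      rw [hyq, hyj]
      by_cases haj : a = some j
      · have h8 := H.2.2.2 j haj
        have h5 := H.1
        linarith
      · exact H.2.1 j haj hbj'
    · intro p hp
      have hpi : p = i := by injection hp.symm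
      rw [hpi, hyi, hyq]
      linarith [H.2.2.1]

lemma stepR {x : Fin 4 → ℝ} {a b : Option (Fin 4)} {i : Fin 4}
    (hbi : b ≠ some i) (h : Phi x a b) :
    Phi (updR i x) (oerase a i) (some i) := by
  have hs : sg (updR i x) = sg x + 4 * x i := sg_updR i x
  have h1 := h.1
  have hyi : updR i x i = -x i := by simp [updR]
  have hxi : 1 ≤ x i := by
    by_cases hai : a = some i
    · have := h.2.2.1 i hai; linarith
    · exact (h.2.1 i hai hbi).1
  refine ⟨by linarith, ?_, ?_, ?_⟩
  · intro j haj hij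
    have hji : j ≠ i := fun e => hij (by rw [e])
    have hyj : updR i x j = x j + 2 * x i := by simp [updR, hji]
    have haj' : a ≠ some j := fun e => haj (oerase_eq_some.mpr ⟨e, hji⟩)
    rw [hyj, hs]
    by_cases hbjq : b = some j
    · have H := h.2.2.2 j hbjq
      by_cases hai : a = some i
      · have h8 := H.2.2.2 i hai
        have h4 := h.2.2.1 i hai
        have h5 := H.1
        exact ⟨by linarith, by linarith⟩
      · have h6 := H.2.1 i hai hbi
        have h5 := H.1
        exact ⟨by linarith, by linarith⟩
    · have h2 := h.2.1 j haj' hbjq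
      exact ⟨by linarith [h2.1], by linarith [h2.2]⟩
  · intro p hp
    obtain ⟨hap, hpi⟩ := oerase_eq_some.mp hp
    have h4 := h.2.2.1 p hap
    have hyp : updR i x p = x p + 2 * x i := by simp [updR, hpi]
    rw [hyp, hs]
    linarith
  · intro q hq
    have hqi : q = i := by injection hq.symm
    subst hqi
    refine ⟨by rw [hyi]; linarith, ?_, by rw [hs, hyi]; linarith, ?_⟩
    · intro j haj hqj
      have hji : j ≠ q := fun e => hqj (by rw [e])
      have hyj : updR q x j = x j + 2 * x q := by simp [updR, hji]
      have haj' : a ≠ some j := fun e => haj (oerase_eq_some.mpr ⟨e, hji⟩)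
      rw [hyi, hyj]
      by_cases hajq : a = some j
      · have h4 := h.2.2.1 j hajq
        linarith
      · by_cases hbjq : b = some j
        · have H := h.2.2.2 j hbjq
          by_cases hai : a = some q
          · have h8 := H.2.2.2 q hai
            have h5 := H.1
            linarith
          · have h6 := H.2.1 q hai hbi
            linarith
        · have h2 := h.2.1 j hajq hbjq
          linarith
    · intro p hp
      obtain ⟨hap, hpi⟩ := oerase_eq_some.mp hp
      have h4 := h.2.2.1 p hap
      have hyp : updR q x p = x p + 2 * x q := by simp [updR, hpi]
      rw [hyi, hyp]
      linarith

lemma baseL (i : Fin 4) : Phi (updL i fun _ => 1) (some i) none := by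
  have hs : sg (fun _ : Fin 4 => (1:ℝ)) = 4 := by norm_num [sg]
  have hs' : sg (updL i fun _ => 1) = 8 := by rw [sg_updL, hs]; norm_num
  refine ⟨by rw [hs'], ?_, ?_, by simp⟩
  · intro j hij _
    have hji : j ≠ i := fun e => hij (by rw [e])
    have hv : updL i (fun _ => (1:ℝ)) j = 1 := by simp [updL, hji]
    rw [hv, hs']; norm_num
  · intro p hp
    have hpi : p = i := by injection hp.symm
    have hv : updL i (fun _ => (1:ℝ)) i = 5 := by simp [updL, hs]; norm_num
    rw [hpi, hv, hs']; norm_num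

lemma baseR (i : Fin 4) : Phi (updR i fun _ => 1) none (some i) := by
  have hs' : sg (updR i fun _ => 1) = 8 := by rw [sg_updR]; norm_num [sg]
  have hyi : updR i (fun _ => (1:ℝ)) i = -1 := by simp [updR]
  refine ⟨by rw [hs'], ?_, by simp, ?_⟩
  · intro j _ hbj
    have hji : j ≠ i := fun e => hbj (by rw [e])
    have hv : updR i (fun _ => (1:ℝ)) j = 3 := by simp [updR, hji]; norm_num
    rw [hv, hs']; norm_num
  · intro q hq
    have hqi : q = i := by injection hq.symm
    subst hqi
    refine ⟨by rw [hyi], ?_, by rw [hs', hyi]; norm_num, by simp⟩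
    intro j _ hbj
    have hji : j ≠ q := fun e => hbj (by rw [e])
    have hv : updR q (fun _ => (1:ℝ)) j = 3 := by simp [updR, hji]; norm_num
    rw [hyi, hv]; norm_num



abbrev B := Fin 4 ⊕ Fin 4


def cs : CoxeterSystem superApollonianCoxeterMatrix superApollonianCoxeterMatrix.Group := superApollonianCoxeterMatrix.toCoxeterSystem

def commB : B → B → Bool
  | Sum.inl i, Sum.inr j => decide (i ≠ j)
  | Sum.inr i, Sum.inl j => decide (i ≠ j)
  | _, _ => false

def allowed (c : B) : List B → Bool
  | [] => true
  | d :: t => if d = c then false else if commB c d then allowed c t else true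

def NF : List B → Bool
  | [] => true
  | c :: t => allowed c t && NF t

lemma M_lr {i j : Fin 4} (h : i ≠ j) : superApollonianCoxeterMatrix.M (Sum.inl i) (Sum.inr j) = 2 := by
  show (Matrix.of _ : Matrix B B ℕ) _ _ = 2
  rw [Matrix.of_apply]
  simp [h]

lemma M_rl {i j : Fin 4} (h : i ≠ j) : superApollonianCoxeterMatrix.M (Sum.inr i) (Sum.inl j) = 2 := by
  show (Matrix.of _ : Matrix B B ℕ) _ _ = 2
  rw [Matrix.of_apply]
  simp [h]

lemma comm_of_sq {G : Type*} [Group G] {g h : G} (hgh : (g * h) ^ 2 = 1)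
    (hg : g * g = 1) (hh : h * h = 1) : g * h = h * g := by
  have h1 : (g * h) * (g * h) = 1 := by rw [← sq]; exact hgh
  have h2 : g * h = (g * h)⁻¹ := by
    rw [eq_comm, inv_eq_iff_mul_eq_one]; exact h1
  rw [h2, _root_.mul_inv_rev, inv_eq_of_mul_eq_one_right hh, inv_eq_of_mul_eq_one_right hg]

lemma simple_comm {c d : B} (h : commB c d = true) :
    cs.simple c * cs.simple d = cs.simple d * cs.simple c := by
  have hg := cs.simple_mul_simple_self c
  have hh := cs.simple_mul_simple_self d
  match c, d with
  | Sum.inl i, Sum.inr j =>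
    have hij : i ≠ j := of_decide_eq_true h
    have := cs.simple_mul_simple_pow (Sum.inl i) (Sum.inr j)
    rw [M_lr hij] at this
    exact comm_of_sq this hg hh
  | Sum.inr i, Sum.inl j =>
    have hij : i ≠ j := of_decide_eq_true h
    have := cs.simple_mul_simple_pow (Sum.inr i) (Sum.inl j)
    rw [M_rl hij] at this
    exact comm_of_sq this hg hh

lemma notAllowed_decomp : ∀ (t : List B) (c : B), allowed c t = false →
    ∃ u r, t = u ++ c :: r ∧ ∀ d ∈ u, commB c d = true := by
  intro t
  induction t with
  | nil => intro c h; simp [allowed] at h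
  | cons d t ih =>
    intro c h
    by_cases hdc : d = c
    · exact ⟨[], t, by rw [hdc]; rfl, by simp⟩
    · by_cases hcd : commB c d = true
      · have h' : allowed c t = false := by simpa [allowed, hdc, hcd] using h
        obtain ⟨u, r, hdec, hu⟩ := ih c h'
        refine ⟨d :: u, r, by rw [hdec]; rfl, ?_⟩
        intro e he
        rcases List.mem_cons.mp he with rfl | he2
        · exact hcd
        · exact hu e he2
      · simp [allowed, hdc, hcd] at h

lemma pass (c : B) : ∀ (u : List B), (∀ d ∈ u, commB c d = true) →
    cs.simple c * cs.wordProd u = cs.wordProd u * cs.simple c := by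
  intro u
  induction u with
  | nil => simp [CoxeterSystem.wordProd_nil]
  | cons d u ih =>
    intro h
    have hcomm := simple_comm (h d (List.mem_cons_self (a := d) (l := u)))
    have ih' := ih fun e he => h e (List.mem_cons_of_mem d he)
    rw [CoxeterSystem.wordProd_cons, ← mul_assoc, hcomm, mul_assoc, ih', ← mul_assoc]

lemma rewrite_nf : ∀ (n : ℕ) (ω : List B), ω.length ≤ n →
    ∃ ω', NF ω' = true ∧ cs.wordProd ω' = cs.wordProd ω ∧ ω'.length ≤ ω.length := by
  intro n
  induction n with
  | zero =>
    intro ω h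
    have : ω = [] := List.length_eq_zero_iff.mp (Nat.le_zero.mp h)
    subst this
    exact ⟨[], rfl, rfl, le_rfl⟩
  | succ n ih =>
    intro ω hlen
    cases ω with
    | nil => exact ⟨[], rfl, rfl, le_rfl⟩
    | cons c t =>
      have ht : t.length ≤ n := by simp [List.length_cons] at hlen; omega
      obtain ⟨t', hNF, hprod, hlen'⟩ := ih t ht
      by_cases hall : allowed c t' = true
      · refine ⟨c :: t', ?_, ?_, ?_⟩
        · simp [NF, hall, hNF]
        · rw [CoxeterSystem.wordProd_cons, CoxeterSystem.wordProd_cons, hprod]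
        · simpa [List.length_cons] using Nat.succ_le_succ hlen'
      · have hall' : allowed c t' = false := by
          revert hall; cases allowed c t' <;> simp
        obtain ⟨u, r, hdec, hu⟩ := notAllowed_decomp t' c hall'
        have hπ : cs.wordProd (c :: t') = cs.wordProd (u ++ r) := by
          rw [hdec, CoxeterSystem.wordProd_cons, CoxeterSystem.wordProd_append,
            CoxeterSystem.wordProd_append, CoxeterSystem.wordProd_cons,
            ← mul_assoc, pass c u hu, mul_assoc, cs.simple_mul_simple_cancel_left]
        have hlent' : t'.length = u.length + r.length + 1 := by
          rw [hdec]; simp; omega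
        have hlen2 : (u ++ r).length ≤ n := by
          simp only [List.length_append]
          omega
        obtain ⟨ω', h1, h2, h3⟩ := ih (u ++ r) hlen2
        refine ⟨ω', h1, ?_, ?_⟩
        · rw [h2, ← hπ, CoxeterSystem.wordProd_cons, CoxeterSystem.wordProd_cons, hprod]
        · simp only [List.length_append] at h3
          simp only [List.length_cons]
          omega


def aSt : List B → Option (Fin 4)
  | [] => none
  | Sum.inl i :: _ => some i
  | Sum.inr i :: t => oerase (aSt t) i

def bSt : List B → Option (Fin 4)
  | [] => none
  | Sum.inr i :: _ => some i
  | Sum.inl i :: t => oerase (bSt t) i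

noncomputable def Tmat : B → Matrix (Fin 4) (Fin 4) ℝ :=
  Sum.elim S (fun i => (S i)ᵀ)

lemma S_mulVec (i : Fin 4) (x : Fin 4 → ℝ) : S i *ᵥ x = updL i x := by
  funext j
  fin_cases i <;> fin_cases j <;>
    simp [S, updL, sg, Matrix.mulVec, dotProduct, Fin.sum_univ_four] <;> ring

lemma ST_mulVec (i : Fin 4) (x : Fin 4 → ℝ) : (S i)ᵀ *ᵥ x = updR i x := by
  funext j
  fin_cases i <;> fin_cases j <;>
    simp [S, updR, sg, Matrix.mulVec, dotProduct, Matrix.transpose_apply,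
      Fin.sum_univ_four] <;> ring

lemma oerase_ne_self (o : Option (Fin 4)) (i : Fin 4) : oerase o i ≠ some i := by
  intro h
  exact (oerase_eq_some.mp h).2 rfl

lemma allowed_inl {i : Fin 4} : ∀ t : List B, allowed (Sum.inl i) t = true →
    aSt t ≠ some i := by
  intro t
  induction t with
  | nil => intro _; simp [aSt]
  | cons d t ih =>
    intro h
    cases d with
    | inl j =>
      by_cases hji : j = i
      · subst hji; simp [allowed] at h
      · show some j ≠ some i
        simp [hji]
    | inr j =>
      by_cases hji : j = i
      · subst hji
        exact oerase_ne_self _ _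
      · have hc : commB (Sum.inl i) (Sum.inr j) = true :=
          decide_eq_true (fun e => hji e.symm)
        have h' : allowed (Sum.inl i) t = true := by
          simpa [allowed, hc] using h
        intro e
        exact ih h' (oerase_eq_some.mp e).1

lemma allowed_inr {i : Fin 4} : ∀ t : List B, allowed (Sum.inr i) t = true →
    bSt t ≠ some i := by
  intro t
  induction t with
  | nil => intro _; simp [bSt]
  | cons d t ih =>
    intro h
    cases d with
    | inr j =>
      by_cases hji : j = i
      · subst hji; simp [allowed] at h
      · show some j ≠ some i
        simp [hji]
    | inl j =>
      by_cases hji : j = i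
      · subst hji
        exact oerase_ne_self _ _
      · have hc : commB (Sum.inr i) (Sum.inl j) = true :=
          decide_eq_true (fun e => hji e.symm)
        have h' : allowed (Sum.inr i) t = true := by
          simpa [allowed, hc] using h
        intro e
        exact ih h' (oerase_eq_some.mp e).1

noncomputable def vv (ω : List B) : Fin 4 → ℝ := (ω.map Tmat).prod *ᵥ (fun _ => 1)

lemma vv_nil : vv [] = fun _ => 1 := by
  simp [vv]

lemma vv_cons (c : B) (ω : List B) : vv (c :: ω) = Tmat c *ᵥ vv ω := by
  simp [vv, List.prod_cons, ← Matrix.mulVec_mulVec]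

lemma nf_phi : ∀ ω : List B, NF ω = true → ω ≠ [] →
    Phi (vv ω) (aSt ω) (bSt ω) := by
  intro ω
  induction ω with
  | nil => intro _ h; exact absurd rfl h
  | cons c t ih =>
    intro hNF _
    have h1 : allowed c t = true ∧ NF t = true := by
      simpa [NF, Bool.and_eq_true] using hNF
    cases t with
    | nil =>
      cases c with
      | inl i =>
        have hv : vv [Sum.inl i] = updL i (fun _ => 1) := by
          rw [vv_cons, vv_nil, show Tmat (Sum.inl i) = S i from rfl, S_mulVec]
        show Phi (vv [Sum.inl i]) (some i) (oerase none i)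
        rw [hv, show oerase none i = none from rfl]
        exact baseL i
      | inr i =>
        have hv : vv [Sum.inr i] = updR i (fun _ => 1) := by
          rw [vv_cons, vv_nil, show Tmat (Sum.inr i) = (S i)ᵀ from rfl, ST_mulVec]
        show Phi (vv [Sum.inr i]) (oerase none i) (some i)
        rw [hv, show oerase none i = none from rfl]
        exact baseR i
    | cons d t2 =>
      have hPhi := ih h1.2 (by simp)
      cases c with
      | inl i =>
        have hA : aSt (d :: t2) ≠ some i := allowed_inl _ h1.1
        have hv : vv (Sum.inl i :: d :: t2) = updL i (vv (d :: t2)) := by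
          rw [vv_cons, show Tmat (Sum.inl i) = S i from rfl, S_mulVec]
        show Phi (vv (Sum.inl i :: d :: t2)) (some i) (oerase (bSt (d :: t2)) i)
        rw [hv]
        exact stepL hA hPhi
      | inr i =>
        have hB : bSt (d :: t2) ≠ some i := allowed_inr _ h1.1
        have hv : vv (Sum.inr i :: d :: t2) = updR i (vv (d :: t2)) := by
          rw [vv_cons, show Tmat (Sum.inr i) = (S i)ᵀ from rfl, ST_mulVec]
        show Phi (vv (Sum.inr i :: d :: t2)) (oerase (aSt (d :: t2)) i) (some i)
        rw [hv]
        exact stepR hB hPhi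

end SuperApollonian

open SuperApollonian in
/-- The super-Apollonian group is a Coxeter group: the homomorphism from the
Coxeter group of `superApollonianCoxeterMatrix` to `GL(4, ℝ)` sending the
generators of the first block to the Apollonian generators `S i` and those of
the second block to the dual generators `S iᵀ` is injective. Hence the
super-Apollonian group has the presentation with relations
`S i² = (S iᵀ)² = I` and `(S i · S jᵀ)² = I` for `i ≠ j`. -/
theorem superApollonian_is_coxeter
    (φ : superApollonianCoxeterMatrix.Group →* GL (Fin 4) ℝ)
    (hS : ∀ i : Fin 4,
      (φ (superApollonianCoxeterMatrix.simple (Sum.inl i)) :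
        Matrix (Fin 4) (Fin 4) ℝ) = S i)
    (hST : ∀ i : Fin 4,
      (φ (superApollonianCoxeterMatrix.simple (Sum.inr i)) :
        Matrix (Fin 4) (Fin 4) ℝ) = (S i)ᵀ) :
    Function.Injective φ := by
  have word_mat : ∀ ω : List B,
      (φ (cs.wordProd ω) : Matrix (Fin 4) (Fin 4) ℝ) = (ω.map Tmat).prod := by
    intro ω
    induction ω with
    | nil => simp [CoxeterSystem.wordProd_nil]
    | cons c t iht =>
      rw [CoxeterSystem.wordProd_cons, _root_.map_mul, List.map_cons, List.prod_cons,
        Units.val_mul, iht]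
      congr 1
      have hsimple : cs.simple c = superApollonianCoxeterMatrix.simple c := by
        show superApollonianCoxeterMatrix.toCoxeterSystem.simple c = _
        rw [superApollonianCoxeterMatrix.toCoxeterSystem_simple]
      rw [hsimple]
      cases c with
      | inl i => exact hS i
      | inr i => exact hST i
  rw [injective_iff_map_eq_one]
  intro w hw
  obtain ⟨ω, rfl⟩ := cs.wordProd_surjective w
  obtain ⟨ω', hNF, hprod, _⟩ := rewrite_nf ω.length ω le_rfl
  by_cases hnil : ω' = []
  · rw [← hprod]
    subst hnil
    exact cs.wordProd_nil
  · exfalso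
    have hPhi := nf_phi ω' hNF hnil
    have hmat : ((ω'.map Tmat).prod : Matrix (Fin 4) (Fin 4) ℝ) = 1 := by
      rw [← word_mat ω', hprod, hw, Units.val_one]
    have hvv : vv ω' = fun _ => 1 := by
      rw [vv, hmat, Matrix.one_mulVec]
    have h8 := hPhi.1
    rw [hvv] at h8
    norm_num [sg] at h8
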